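/- For all integers r, n with 1 ≤ r ≤ n, there exists an n-state weakly acyclic automaton A over a one-letter alphabet {x} such that A has rank r, some word of length n − r has rank r with respect to A, and every word of rank r with respect to A has length at least n − r. (The automaton has states q_1, …, q_n with δ(q_i, x) = q_{i+1} for 1 ≤ i ≤ n − r and δ(q_i, x) = q_i for n − r + 1 ≤ i ≤ n.) -/
import Mathlib


/-- The extension of the transition function to words. -/
def deltaStar {Q A : Type*} (δ : Q → A → Q) (q : Q) (w : List A) : Q := w.foldl δ q

/-- A simple cycle: pairwise distinct states `q 0, …, q (k-1)` together with letters
mapping each state of the cycle to the next one (cyclically). -/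
def IsSimpleCycle {Q A : Type*} (δ : Q → A → Q) (k : ℕ) (q : Fin k → Q) : Prop :=
  0 < k ∧ Function.Injective q ∧
    ∃ x : Fin k → A, ∀ i : Fin k, δ (q i) (x i) = q ⟨(i.val + 1) % k, Nat.mod_lt _ i.pos⟩

/-- An automaton is weakly acyclic if all its simple cycles are self-loops. -/
def WeaklyAcyclic {Q A : Type*} (δ : Q → A → Q) : Prop :=
  ∀ (k : ℕ) (q : Fin k → Q), IsSimpleCycle δ k q → k = 1

/-- A sink state is fixed by every letter. -/
def IsSink {Q A : Type*} (δ : Q → A → Q) (q : Q) : Prop := ∀ x : A, δ q x = q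

/-- The word `w` synchronizes the set `S` of states. -/
def SyncsSet {Q A : Type*} (δ : Q → A → Q) (S : Finset Q) (w : List A) : Prop :=
  ∃ q : Q, ∀ s ∈ S, deltaStar δ s w = q

/-- A set of states is synchronizing if some word synchronizes it. -/
def IsSyncSet {Q A : Type*} (δ : Q → A → Q) (S : Finset Q) : Prop :=
  ∃ w : List A, SyncsSet δ S w

/-- The rank of a word with respect to an automaton: the size of the image of the
state set under the word. -/
def wordRank {Q A : Type*} [Fintype Q] [DecidableEq Q] (δ : Q → A → Q) (w : List A) : ℕ :=
  (Finset.univ.image fun q => deltaStar δ q w).card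

/-- The rank of an automaton: the minimum rank of a word with respect to it. -/
noncomputable def autRank {Q A : Type*} [Fintype Q] [DecidableEq Q] (δ : Q → A → Q) : ℕ :=
  sInf {r | ∃ w : List A, wordRank δ w = r}

/-- The rank of a word with respect to a subset of states. -/
def subsetWordRank {Q A : Type*} [DecidableEq Q] (δ : Q → A → Q) (S : Finset Q)
    (w : List A) : ℕ :=
  (S.image fun q => deltaStar δ q w).card

/-- The rank of a subset of states: the minimum rank of a word with respect to it. -/
noncomputable def subsetRank {Q A : Type*} [DecidableEq Q] (δ : Q → A → Q) (S : Finset Q) : ℕ :=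
  sInf {r | ∃ w : List A, subsetWordRank δ S w = r}

/-- `w^j`: the word obtained by `j` concatenations of `w`. -/
def wordPow {A : Type*} (w : List A) (j : ℕ) : List A := (List.replicate j w).flatten

/-- For all `1 ≤ r ≤ n` there is an `n`-state weakly acyclic automaton over a one-letter
alphabet of rank `r` such that some word of length `n - r` has rank `r` and every word of
rank `r` has length at least `n - r`. -/
theorem stmt4 (r n : ℕ) (h1 : 1 ≤ r) (h2 : r ≤ n) :
    ∃ δ : Fin n → Unit → Fin n,
      WeaklyAcyclic δ ∧ autRank δ = r ∧
      (∃ w : List Unit, w.length = n - r ∧ wordRank δ w = r) ∧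
      (∀ w : List Unit, wordRank δ w = r → n - r ≤ w.length) := by
  classical
  set m := n - r with hmdef
  have hmn : m < n := by omega
  set δ : Fin n → Unit → Fin n :=
    fun i _ => if h : i.val < m then ⟨i.val + 1, by omega⟩ else i with hδ
  have hstep : ∀ (i : Fin n) (a : Unit),
      (δ i a).val = if i.val < m then i.val + 1 else i.val := by
    intro i a
    simp only [hδ]
    split <;> simp
  have key : ∀ (w : List Unit) (q : Fin n),
      (deltaStar δ q w).val = max q.val (min (q.val + w.length) m) := by
    intro w
    induction w with
    | nil => intro q; simp only [deltaStar, List.foldl_nil, List.length_nil, Nat.add_zero]; omega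
    | cons a t ih =>
      intro q
      have hcons : deltaStar δ q (a :: t) = deltaStar δ (δ q a) t := rfl
      rw [hcons, ih (δ q a), hstep q a]
      simp only [List.length_cons]
      split <;> omega
  have hrank : ∀ w : List Unit, wordRank δ w = n - min w.length m := by
    intro w
    have hc : min w.length m < n := by omega
    have himg : (Finset.univ.image fun q => deltaStar δ q w)
        = Finset.Ici (⟨min w.length m, hc⟩ : Fin n) := by
      ext j
      simp only [Finset.mem_image, Finset.mem_univ, true_and, Finset.mem_Ici, Fin.le_def]
      constructor
      · rintro ⟨q, rfl⟩
        rw [key]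
        omega
      · intro hj
        rcases Nat.lt_or_ge j.val m with h | h
        · have hL : w.length ≤ j.val := by omega
          refine ⟨⟨j.val - w.length, by omega⟩, ?_⟩
          apply Fin.ext
          rw [key]
          simp only []
          omega
        · refine ⟨j, ?_⟩
          apply Fin.ext
          rw [key]
          omega
    unfold wordRank
    rw [himg, Fin.card_Ici]
  have hmono : ∀ (i : Fin n) (a : Unit), i.val ≤ (δ i a).val := by
    intro i a
    rw [hstep i a]
    split <;> omega
  have hWA : WeaklyAcyclic δ := by
    rintro k q ⟨hk, hinj, x, hx⟩
    by_contra hk1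
    obtain ⟨i0, -, hmax⟩ := Finset.exists_max_image Finset.univ (fun i => (q i).val)
      ⟨⟨0, hk⟩, Finset.mem_univ _⟩
    set j : Fin k := ⟨(i0.val + 1) % k, Nat.mod_lt _ i0.pos⟩ with hjdef
    have hle1 : (q i0).val ≤ (q j).val := by
      rw [← hx i0]
      exact hmono (q i0) (x i0)
    have hle2 : (q j).val ≤ (q i0).val := hmax j (Finset.mem_univ _)
    have hq : q j = q i0 := Fin.ext (le_antisymm hle2 hle1)
    have hji : j = i0 := hinj hq
    have hval : (i0.val + 1) % k = i0.val := congrArg Fin.val hji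
    have hi0 : i0.val < k := i0.isLt
    rcases Nat.lt_or_ge (i0.val + 1) k with h | h
    · rw [Nat.mod_eq_of_lt h] at hval
      omega
    · have hkeq : i0.val + 1 = k := by omega
      rw [hkeq, Nat.mod_self] at hval
      omega
  have hw0 : wordRank δ (List.replicate m ()) = r := by
    rw [hrank]
    simp only [List.length_replicate]
    omega
  have hAR : autRank δ = r := by
    apply le_antisymm
    · exact Nat.sInf_le ⟨_, hw0⟩
    · refine le_csInf ⟨r, ⟨List.replicate m (), hw0⟩⟩ ?_
      rintro b ⟨w, rfl⟩
      rw [hrank]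
      omega
  exact ⟨δ, hWA, hAR, ⟨List.replicate m (), by simp, hw0⟩,
    fun w hw => by rw [hrank] at hw; omega⟩
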